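/- For every real number x > 0 and every integer y > 2, Σ_{k=2}^{y} I₁(2x/k) ≤ x·log y + 2·I₁(x) − (2 − γ − 1/(2y))·x, where γ is the Euler–Mascheroni constant. -/

import Mathlib

section helpers
open Real Finset


lemma log_le_half {a : ℝ} (ha : 1 ≤ a) : Real.log a ≤ (a - a⁻¹) / 2 := by
  have h0 : (0:ℝ) < a := lt_of_lt_of_le one_pos ha
  have h := Real.self_le_sinh_iff.mpr (Real.log_nonneg ha)
  rwa [Real.sinh_eq, Real.exp_log h0, Real.exp_neg, Real.exp_log h0] at h

lemma harmonic_le (n : ℕ) (hn : 1 ≤ n) :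
    (harmonic n : ℝ) ≤ Real.log n + Real.eulerMascheroniConstant + 1 / (2 * n) := by
  set b : ℕ → ℝ := fun m => (harmonic m : ℝ) - Real.log m - 1 / (2 * m) with hb
  have hmono : ∀ m : ℕ, 1 ≤ m → b m ≤ b (m + 1) := by
    intro m hm
    have hm0 : (0:ℝ) < m := by exact_mod_cast hm
    have ha : (1:ℝ) ≤ ((m:ℝ) + 1) / m := by
      rw [le_div_iff₀ hm0]; linarith
    have hlog := log_le_half ha
    rw [Real.log_div (by linarith) (by positivity), inv_div] at hlog
    have harm : (harmonic (m+1) : ℝ) = (harmonic m : ℝ) + 1 / ((m:ℝ)+1) := by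
      rw [harmonic_succ]; push_cast; ring
    have hA : (((m:ℝ)+1)/m - (m:ℝ)/((m:ℝ)+1)) / 2
        = 1/((m:ℝ)+1) - 1/(2*((m:ℝ)+1)) + 1/(2*(m:ℝ)) := by
      field_simp; ring
    simp only [hb]
    push_cast
    rw [harm]
    linarith [hlog, hA.le]
  have hchain : ∀ m : ℕ, n ≤ m → b n ≤ b m := by
    intro m hm
    induction m, hm using Nat.le_induction with
    | base => exact le_refl _
    | succ k hk ih => exact ih.trans (hmono k (le_trans hn hk))
  have htend : Filter.Tendsto b Filter.atTop (nhds Real.eulerMascheroniConstant) := by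
    have h1 := Real.tendsto_harmonic_sub_log
    have h2 : Filter.Tendsto (fun m : ℕ => 1 / (2 * (m:ℝ))) Filter.atTop (nhds 0) := by
      have := tendsto_one_div_atTop_nhds_zero_nat.const_mul (1/2 : ℝ)
      simpa [one_div, mul_inv, mul_comm] using this
    have h3 := h1.sub h2
    simp only [hb]
    simpa [one_div, mul_inv, mul_comm] using h3
  have : b n ≤ Real.eulerMascheroniConstant :=
    ge_of_tendsto htend (Filter.eventually_atTop.2 ⟨n, hchain⟩)
  simp only [hb] at this
  linarith


lemma sum_cube_le' (y : ℕ) (hy : 1 ≤ y) :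
    ∑ k ∈ Finset.Icc 2 y, ((k:ℝ)⁻¹) ^ 3 ≤ 1/4 - 1/(2*(y:ℝ)*((y:ℝ)+1)) := by
  induction y, hy using Nat.le_induction with
  | base => simp; norm_num
  | succ n hn ih =>
    rw [Finset.sum_Icc_succ_top (by omega)]
    have hn' : (1:ℝ) ≤ n := by exact_mod_cast hn
    have h : ((n:ℝ)+1)⁻¹ ^ 3 ≤ 1/(2*(n:ℝ)*((n:ℝ)+1)) - 1/(2*((n:ℝ)+1)*((n:ℝ)+2)) := by
      rw [inv_pow, inv_eq_one_div, div_sub_div _ _ (by positivity) (by positivity),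
        div_le_div_iff₀ (by positivity) (by positivity)]
      nlinarith
    push_cast
    push_cast at ih
    rw [show ((n:ℝ)+1+1) = (n:ℝ)+2 by ring]
    linarith

lemma summable_aux (u : ℝ) :
    Summable (fun m : ℕ => (1 / (m.factorial * (m + 1).factorial) : ℝ) * u ^ (2 * m + 1)) := by
  have hg : Summable (fun m : ℕ => |u| * ((u^2)^m / m.factorial)) :=
    (Real.summable_pow_div_factorial (u^2)).mul_left _
  refine Summable.of_abs (Summable.of_nonneg_of_le (fun m => abs_nonneg _) (fun m => ?_) hg)
  have h1 : |(1 / (m.factorial * (m + 1).factorial) : ℝ)| = 1 / (m.factorial * (m + 1).factorial) :=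
    abs_of_nonneg (by positivity)
  rw [abs_mul, h1, abs_pow]
  have h2 : (1 / (m.factorial * (m + 1).factorial) : ℝ) ≤ 1 / m.factorial := by
    apply one_div_le_one_div_of_le (by positivity)
    calc (m.factorial : ℝ) = m.factorial * 1 := by ring
    _ ≤ m.factorial * (m+1).factorial := by
        gcongr
        exact_mod_cast Nat.one_le_iff_ne_zero.mpr (m+1).factorial_ne_zero
  have h3 : |u| ^ (2 * m + 1) = (u^2)^m * |u| := by
    rw [pow_succ, pow_mul, sq_abs]
  rw [h3]
  calc (1 / (m.factorial * (m + 1).factorial) : ℝ) * ((u^2)^m * |u|)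
      ≤ (1 / m.factorial : ℝ) * ((u^2)^m * |u|) := by
        apply mul_le_mul_of_nonneg_right h2 (by positivity)
    _ = |u| * ((u^2)^m / m.factorial) := by ring

/-- The modified Bessel function of the first kind `I₁`. -/
noncomputable def besselI1 (x : ℝ) : ℝ :=
  ∑' m : ℕ, (1 / (m.factorial * (m + 1).factorial) : ℝ) * (x / 2) ^ (2 * m + 1)

/-- for real `x > 0` and integer `y > 2`,
`Σ_{k=2}^{y} I₁(2x/k) ≤ x log y + 2 I₁(x) - (2 - γ - 1/(2y)) x`. -/
theorem besselI1_sum_bound (x : ℝ) (hx : 0 < x) (y : ℕ) (hy : 2 < y) :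
    ∑ k ∈ Finset.Icc 2 y, besselI1 (2 * x / k) ≤
      x * Real.log y + 2 * besselI1 x -
        (2 - Real.eulerMascheroniConstant - 1 / (2 * y)) * x := by
  have hy1 : 1 ≤ y := by omega
  set S : ℕ → ℝ := fun m => ∑ k ∈ Finset.Icc 2 y, ((k:ℝ)⁻¹) ^ (2*m+1) with hSdef
  have hS_nonneg : ∀ m, 0 ≤ S m := by
    intro m; rw [hSdef]; exact Finset.sum_nonneg fun k _ => by positivity
  have hS_le_card : ∀ m, S m ≤ (y:ℝ) := by
    intro m; rw [hSdef]
    calc (∑ k ∈ Finset.Icc 2 y, ((k:ℝ)⁻¹) ^ (2*m+1))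
        ≤ ∑ k ∈ Finset.Icc 2 y, (1:ℝ) := by
          apply Finset.sum_le_sum
          intro k hk
          have hk2 : 2 ≤ k := (Finset.mem_Icc.mp hk).1
          have hk1 : (1:ℝ) ≤ (k:ℝ) := by exact_mod_cast (by omega : 1 ≤ k)
          have hinv : ((k:ℝ))⁻¹ ≤ 1 := inv_le_one_of_one_le₀ hk1
          exact pow_le_one₀ (by positivity) hinv
      _ = ((Finset.Icc 2 y).card : ℝ) := by simp
      _ ≤ (y:ℝ) := by
          rw [Nat.card_Icc]
          exact_mod_cast (by omega : y + 1 - 2 ≤ y)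
  have hS1 : ∀ m : ℕ, S (m+1) ≤ (1/4:ℝ)^(m+1) := by
    intro m
    rw [hSdef]
    have step : ∀ k ∈ Finset.Icc 2 y, ((k:ℝ)⁻¹) ^ (2*(m+1)+1) ≤ ((k:ℝ)⁻¹)^3 * (1/4:ℝ)^m := by
      intro k hk
      have hk2 : (2:ℝ) ≤ (k:ℝ) := by exact_mod_cast (Finset.mem_Icc.mp hk).1
      have hkpos : (0:ℝ) < (k:ℝ) := by linarith
      have h1 : ((k:ℝ)⁻¹)^2 ≤ 1/4 := by
        rw [inv_pow]
        have h4 : (4:ℝ) ≤ (k:ℝ)^2 := by nlinarith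
        calc ((k:ℝ)^2)⁻¹ ≤ (4:ℝ)⁻¹ := by
              apply inv_anti₀ (by norm_num) h4
          _ = 1/4 := by norm_num
      have hexp : 2*(m+1)+1 = 3 + 2*m := by omega
      rw [hexp, pow_add, pow_mul]
      exact mul_le_mul_of_nonneg_left (pow_le_pow_left₀ (by positivity) h1 m) (by positivity)
    calc (∑ k ∈ Finset.Icc 2 y, ((k:ℝ)⁻¹) ^ (2*(m+1)+1))
        ≤ ∑ k ∈ Finset.Icc 2 y, ((k:ℝ)⁻¹)^3 * (1/4:ℝ)^m := Finset.sum_le_sum step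
      _ = (∑ k ∈ Finset.Icc 2 y, ((k:ℝ)⁻¹)^3) * (1/4:ℝ)^m := by rw [← Finset.sum_mul]
      _ ≤ (1/4) * (1/4:ℝ)^m := by
          apply mul_le_mul_of_nonneg_right _ (by positivity)
          have h0 : (0:ℝ) ≤ 1/(2*(y:ℝ)*((y:ℝ)+1)) := by positivity
          linarith [sum_cube_le' y hy1]
      _ = (1/4:ℝ)^(m+1) := by rw [pow_succ]; ring
  have hS0 : S 0 ≤ Real.log y + Real.eulerMascheroniConstant + 1/(2*(y:ℝ)) - 1 := by
    have hset : Finset.Icc 1 y = insert 1 (Finset.Icc 2 y) := by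
      ext a; simp only [Finset.mem_Icc, Finset.mem_insert]; omega
    have h1 : (harmonic y : ℝ) = 1 + S 0 := by
      rw [harmonic_eq_sum_Icc]
      push_cast
      rw [hset, Finset.sum_insert (by simp)]
      simp [hSdef]
    have := harmonic_le y hy1
    linarith
  -- rewrite the sum as a tsum
  have hsum_repr : ∀ k ∈ Finset.Icc 2 y, besselI1 (2*x/(k:ℝ)) =
      ∑' m : ℕ, (1 / (m.factorial * (m + 1).factorial) : ℝ) * (x * (k:ℝ)⁻¹)^(2*m+1) := by
    intro k hk
    unfold besselI1
    rw [show (2*x/(k:ℝ))/2 = x * (k:ℝ)⁻¹ from by ring]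
  have hswap : ∑ k ∈ Finset.Icc 2 y, besselI1 (2*x/(k:ℝ)) =
      ∑' m : ℕ, (1 / (m.factorial * (m + 1).factorial) : ℝ) * x^(2*m+1) * S m := by
    rw [Finset.sum_congr rfl hsum_repr]
    refine ((Summable.tsum_finsetSum (f := fun (k : ℕ) (m : ℕ) =>
      (1 / (m.factorial * (m + 1).factorial) : ℝ) * (x * (k:ℝ)⁻¹) ^ (2 * m + 1))
      (fun k _ => summable_aux (x * (k:ℝ)⁻¹))).symm).trans ?_
    apply tsum_congr
    intro m
    simp only [mul_pow, ← mul_assoc, hSdef]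
    rw [Finset.mul_sum]
  -- summability of A
  have hA_sum : Summable (fun m : ℕ =>
      (1 / (m.factorial * (m + 1).factorial) : ℝ) * x^(2*m+1) * S m) := by
    apply Summable.of_nonneg_of_le
      (fun m => mul_nonneg (by positivity) (hS_nonneg m))
      (fun m => mul_le_mul_of_nonneg_left (hS_le_card m) (by positivity))
    exact (summable_aux x).mul_right (y:ℝ)
  -- D and its tsum
  have hD_eq : ∀ m : ℕ, (1 / (m.factorial * (m + 1).factorial) : ℝ) * x^(2*m+1) * (1/4:ℝ)^m
      = 2 * ((1 / (m.factorial * (m + 1).factorial) : ℝ) * (x/2)^(2*m+1)) := by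
    intro m
    have h2p : (2:ℝ)^(2*m+1) = 2 * 4^m := by
      rw [pow_succ, pow_mul]; norm_num [mul_comm]
    rw [div_pow x 2, h2p]
    have hfac : (0:ℝ) < (m.factorial * (m+1).factorial : ℝ) := by positivity
    field_simp
    rw [← mul_pow]; norm_num
  have hD_sum : Summable (fun m : ℕ =>
      (1 / (m.factorial * (m + 1).factorial) : ℝ) * x^(2*m+1) * (1/4:ℝ)^m) :=
    ((summable_aux (x/2)).mul_left 2).congr (fun m => (hD_eq m).symm)
  have hDtsum : ∑' m : ℕ, (1 / (m.factorial * (m + 1).factorial) : ℝ) * x^(2*m+1) * (1/4:ℝ)^m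
      = 2 * besselI1 x := by
    rw [tsum_congr hD_eq, tsum_mul_left]
    rfl
  have hD0 : (1 / ((0:ℕ).factorial * (0+1).factorial) : ℝ) * x^(2*0+1) * (1/4:ℝ)^0 = x := by
    norm_num [Nat.factorial]
  have hDsplit : ∑' m : ℕ,
      (1 / ((m+1).factorial * (m+1+1).factorial) : ℝ) * x^(2*(m+1)+1) * (1/4:ℝ)^(m+1)
      = 2 * besselI1 x - x := by
    have h := Summable.tsum_eq_zero_add hD_sum
    rw [hDtsum, hD0] at h
    linarith
  -- split A
  have hA0 : (1 / ((0:ℕ).factorial * (0+1).factorial) : ℝ) * x^(2*0+1) * S 0 = x * S 0 := by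
    norm_num [Nat.factorial]
  have hsplit := Summable.tsum_eq_zero_add hA_sum
  -- tail bound
  have htail : ∑' m : ℕ,
      (1 / ((m+1).factorial * (m+1+1).factorial) : ℝ) * x^(2*(m+1)+1) * S (m+1)
      ≤ 2 * besselI1 x - x := by
    rw [← hDsplit]
    apply Summable.tsum_le_tsum
    · intro m
      exact mul_le_mul_of_nonneg_left (hS1 m) (by positivity)
    · exact (summable_nat_add_iff (f := fun m : ℕ =>
        (1 / (m.factorial * (m + 1).factorial) : ℝ) * x^(2*m+1) * S m) 1).mpr hA_sum
    · exact (summable_nat_add_iff (f := fun m : ℕ =>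
        (1 / (m.factorial * (m + 1).factorial) : ℝ) * x^(2*m+1) * (1/4:ℝ)^m) 1).mpr hD_sum
  have hA0le : x * S 0 ≤ x * (Real.log y + Real.eulerMascheroniConstant + 1/(2*(y:ℝ)) - 1) :=
    mul_le_mul_of_nonneg_left hS0 hx.le
  have hring : x * (Real.log y + Real.eulerMascheroniConstant + 1/(2*(y:ℝ)) - 1)
      + (2 * besselI1 x - x)
      = x * Real.log y + 2 * besselI1 x - (2 - Real.eulerMascheroniConstant - 1/(2*(y:ℝ))) * x := by
    ring
  rw [hswap, hsplit, hA0]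
  linarith

end helpers
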